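/- Let E be a set well-ordered by <, and define a relation ≺ on finite subsets of E by: X ≺ Y iff X ≠ Y and either X = ∅, or max X < max Y, or max X = max Y = z and X − z ≺ Y − z (recursively). Then ≺ is a well-order on the collection of finite subsets of E. -/

import Mathlib

section Aux

variable {E : Type*} [LinearOrder E] [WellFoundedLT E]
  {r : Finset E → Finset E → Prop}
  (hr : ∀ X Y, r X Y ↔ X ≠ Y ∧ (X = ∅ ∨ X.max < Y.max ∨
      ∃ z : E, X.max = (z : WithBot E) ∧ Y.max = (z : WithBot E) ∧ r (X.erase z) (Y.erase z)))

include hr in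
lemma fow_not_r_empty (Y : Finset E) : ¬ r Y ∅ := by
  intro h
  rw [hr] at h
  obtain ⟨hne, h⟩ := h
  rcases h with h | h | ⟨z, hz1, hz2, _⟩
  · exact hne h
  · simp [Finset.max_empty] at h
  · simp [Finset.max_empty] at hz2

include hr in
lemma fow_irrefl (X : Finset E) : ¬ r X X := fun h => ((hr _ _).1 h).1 rfl

lemma fow_erase_max_lt {X : Finset E} {z : E} (hz : X.max = (z : WithBot E)) :
    (X.erase z).max < (z : WithBot E) := by
  rcases hm : (X.erase z).max with _ | b
  · exact WithBot.bot_lt_coe z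
  · have hb := Finset.mem_of_max hm
    have hbz : b ≠ z := (Finset.mem_erase.1 hb).1
    have hbX : b ∈ X := (Finset.mem_erase.1 hb).2
    have hle : (b : WithBot E) ≤ X.max := Finset.le_max hbX
    rw [hz] at hle
    exact WithBot.coe_lt_coe.2 (lt_of_le_of_ne (WithBot.coe_le_coe.1 hle) hbz)

lemma fow_eq_of_erase {X Y : Finset E} {z : E} (hX : X.max = (z : WithBot E))
    (hY : Y.max = (z : WithBot E)) (h : X.erase z = Y.erase z) : X = Y := by
  have hzX : z ∈ X := Finset.mem_of_max hX
  have hzY : z ∈ Y := Finset.mem_of_max hY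
  rw [← Finset.insert_erase hzX, ← Finset.insert_erase hzY, h]

include hr in
lemma fow_trans (X : Finset E) : ∀ Y Z, r X Y → r Y Z → r X Z := by
  induction X using Finset.strongInduction with
  | _ X IH =>
  intro Y Z hXY hYZ
  have hZne : Z ≠ ∅ := by rintro rfl; exact fow_not_r_empty hr Y hYZ
  rw [hr] at hXY hYZ ⊢
  obtain ⟨hXY1, hXY2⟩ := hXY
  obtain ⟨hYZ1, hYZ2⟩ := hYZ
  rcases hXY2 with rfl | hXY2 | ⟨z, hXz, hYz, hrXY⟩
  · exact ⟨Ne.symm hZne, Or.inl rfl⟩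
  · have hYZ' : Y.max ≤ Z.max := by
      rcases hYZ2 with rfl | h | ⟨w, h1, h2, _⟩
      · simp [Finset.max_empty]
      · exact h.le
      · rw [h1, h2]
    have hXZ : X.max < Z.max := lt_of_lt_of_le hXY2 hYZ'
    exact ⟨by rintro rfl; exact lt_irrefl _ hXZ, Or.inr (Or.inl hXZ)⟩
  · rcases hYZ2 with rfl | h | ⟨w, h1, h2, hrYZ⟩
    · simp [Finset.max_empty] at hYz
    · have hXZ : X.max < Z.max := by rw [hXz, ← hYz]; exact h
      exact ⟨by rintro rfl; exact lt_irrefl _ hXZ, Or.inr (Or.inl hXZ)⟩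
    · have hwz : w = z := by rw [hYz] at h1; exact_mod_cast h1.symm
      rw [hwz] at h1 h2 hrYZ
      have hzX : z ∈ X := Finset.mem_of_max hXz
      have hsub : X.erase z ⊂ X := Finset.erase_ssubset hzX
      have hrXZ : r (X.erase z) (Z.erase z) := IH _ hsub _ _ hrXY hrYZ
      have hne : X ≠ Z := by
        rintro rfl
        exact fow_irrefl hr _ hrXZ
      exact ⟨hne, Or.inr (Or.inr ⟨z, hXz, h2, hrXZ⟩)⟩

include hr in
lemma fow_total (X : Finset E) : ∀ Y, r X Y ∨ X = Y ∨ r Y X := by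
  induction X using Finset.strongInduction with
  | _ X IH =>
  intro Y
  by_cases hX : X = ∅
  · subst hX
    by_cases hY : Y = ∅
    · exact Or.inr (Or.inl hY.symm)
    · exact Or.inl ((hr _ _).2 ⟨fun h => hY h.symm, Or.inl rfl⟩)
  · by_cases hY : Y = ∅
    · subst hY
      exact Or.inr (Or.inr ((hr _ _).2 ⟨Ne.symm hX, Or.inl rfl⟩))
    · obtain ⟨x, hx⟩ := Finset.max_of_nonempty (Finset.nonempty_iff_ne_empty.2 hX)
      obtain ⟨y, hy⟩ := Finset.max_of_nonempty (Finset.nonempty_iff_ne_empty.2 hY)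
      rcases lt_trichotomy x y with h | rfl | h
      · refine Or.inl ((hr _ _).2 ⟨?_, Or.inr (Or.inl ?_)⟩)
        · rintro rfl
          rw [hx] at hy
          have hxy : x = y := by exact_mod_cast hy
          subst hxy
          exact lt_irrefl _ h
        · rw [hx, hy]; exact_mod_cast h
      · have hsub : X.erase x ⊂ X := Finset.erase_ssubset (Finset.mem_of_max hx)
        rcases IH _ hsub (Y.erase x) with h' | h' | h'
        · refine Or.inl ((hr _ _).2 ⟨?_, Or.inr (Or.inr ⟨x, hx, hy, h'⟩)⟩)
          rintro rfl; exact fow_irrefl hr _ h'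
        · exact Or.inr (Or.inl (fow_eq_of_erase hx hy h'))
        · refine Or.inr (Or.inr ((hr _ _).2 ⟨?_, Or.inr (Or.inr ⟨x, hy, hx, h'⟩)⟩))
          rintro rfl; exact fow_irrefl hr _ h'
      · refine Or.inr (Or.inr ((hr _ _).2 ⟨?_, Or.inr (Or.inl ?_)⟩))
        · rintro rfl
          rw [hx] at hy
          have hxy : x = y := by exact_mod_cast hy
          subst hxy
          exact lt_irrefl _ h
        · rw [hx, hy]; exact_mod_cast h

include hr in
lemma fow_acc_aux (z : E) (H : ∀ Y : Finset E, Y.max < (z : WithBot E) → Acc r Y) :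
    ∀ W : Finset E, Acc r W → ∀ X : Finset E,
      X.max = (z : WithBot E) → X.erase z = W → Acc r X := by
  intro W hW
  induction hW with
  | intro W _ IH =>
  intro X hXz hXW
  constructor
  intro Y hYX
  rw [hr] at hYX
  obtain ⟨hne, hY⟩ := hYX
  rcases hY with rfl | hY | ⟨w, hw1, hw2, hrY⟩
  · constructor; intro Z hZ; exact absurd hZ (fow_not_r_empty hr Z)
  · rw [hXz] at hY; exact H Y hY
  · have hwz : w = z := by rw [hXz] at hw2; exact_mod_cast hw2.symm
    subst hwz
    exact IH (Y.erase w) (hXW ▸ hrY) Y hw1 rfl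

include hr in
lemma fow_wf : WellFounded r := by
  have wfm : WellFounded ((· < ·) : WithBot E → WithBot E → Prop) := IsWellFounded.wf
  have key : ∀ m : WithBot E, ∀ X : Finset E, X.max = m → Acc r X := by
    intro m
    refine WellFounded.induction (C := fun m => ∀ X : Finset E, X.max = m → Acc r X) wfm m ?_
    intro m IH X hX
    rcases m with _ | z
    · have hXe : X = ∅ := Finset.max_eq_bot.1 hX
      subst hXe
      constructor; intro Y hY; exact absurd hY (fow_not_r_empty hr Y)
    · have hlt : (X.erase z).max < (z : WithBot E) := fow_erase_max_lt hX
      have hacc : Acc r (X.erase z) := IH _ hlt _ rfl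
      exact fow_acc_aux hr z (fun Y hY => IH _ hY _ rfl) _ hacc X hX rfl
  exact ⟨fun X => key X.max X rfl⟩

end Aux

/-- The relation `≺` on finite subsets of a well-ordered set `(E, <)` given by
`X ≺ Y` iff `X ≠ Y` and either `X = ∅`, or `max X < max Y`, or
`max X = max Y = z` and `X − z ≺ Y − z`, is a well-order on the finite subsets of `E`. -/
theorem finset_order_isWellOrder {E : Type*} [LinearOrder E] [WellFoundedLT E]
    (r : Finset E → Finset E → Prop)
    (hr : ∀ X Y, r X Y ↔ X ≠ Y ∧ (X = ∅ ∨ X.max < Y.max ∨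
      ∃ z : E, X.max = (z : WithBot E) ∧ Y.max = (z : WithBot E) ∧ r (X.erase z) (Y.erase z))) :
    IsWellOrder (Finset E) r := by
  haveI : IsTrichotomous (Finset E) r := ⟨fun a b h1 h2 => ((fow_total hr a b).resolve_left h1).resolve_right h2⟩
  haveI : IsTrans (Finset E) r := ⟨fun a b c hab hbc => fow_trans hr a b c hab hbc⟩
  haveI : IsWellFounded (Finset E) r := ⟨fow_wf hr⟩
  exact ⟨⟩
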